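/- Let S := {n : ℕ | Th(M_n) is sound}. Suppose F : ℕ →. ℕ is a partial computable function such that S ⊆ dom(F) and for every n ∈ S, F(n) ∉ W_n (i.e. F(n) is not the code of any sentence of Th(M_n)). Then the theory {φ : ring sentence | encode φ is a value of F} is not sound, i.e. it contains a sentence that is false in ℤ. -/

import Mathlib

open FirstOrder Language

/-- Sentences of the language of rings are countable. -/
instance : Countable (Σ n, Language.ring.BoundedFormula Empty n) :=
  Language.BoundedFormula.listEncode_sigma_injective.countable

instance : Countable Language.ring.Sentence :=
  Function.Injective.countable
    (f := fun φ : Language.ring.Sentence =>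
      (⟨0, φ⟩ : Σ n, Language.ring.BoundedFormula Empty n))
    (fun _ _ h => by simpa using h)

/-- Gödel numbering of ring sentences. -/
noncomputable instance : Encodable Language.ring.Sentence :=
  Encodable.ofCountable _

/-- `W e` is the domain of the `e`-th partial computable function: the `e`-th
computably enumerable set. -/
def W (e : ℕ) : Set ℕ := {x : ℕ | ((Denumerable.ofNat Nat.Partrec.Code e).eval x).Dom}

/-- `ThM e` is the theory (set of ring sentences) produced by the `e`-th Turing machine. -/
noncomputable def ThM (e : ℕ) : Language.ring.Theory :=
  {φ : Language.ring.Sentence | Encodable.encode φ ∈ W e}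

attribute [local instance] FirstOrder.Ring.compatibleRingOfRing

open Nat.Partrec (Code)
open Nat.Partrec.Code

lemma range_is_W (F : ℕ →. ℕ) (hF : Partrec F) :
    ∃ e : ℕ, ∀ m, m ∈ W e ↔ ∃ n, m ∈ F n := by
  obtain ⟨c, hc⟩ := exists_code.1 (Partrec.nat_iff.1 hF)
  set g : ℕ →. ℕ := fun m =>
    Nat.rfind fun s => Part.some (decide (evaln s.unpair.1 c s.unpair.2 = some m)) with hg
  have h1 : Primrec fun p : ℕ × ℕ => evaln p.2.unpair.1 c p.2.unpair.2 :=
    primrec_evaln.comp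
      (((Primrec.fst.comp (Primrec.unpair.comp Primrec.snd)).pair (Primrec.const c)).pair
        (Primrec.snd.comp (Primrec.unpair.comp Primrec.snd)))
  have h2 : Primrec₂ fun m s : ℕ => decide (evaln s.unpair.1 c s.unpair.2 = some m) :=
    PrimrecPred.decide (Primrec.eq.comp h1 (Primrec.option_some.comp Primrec.fst))
  have hgp : Nat.Partrec g :=
    Partrec.nat_iff.1 (Partrec.rfind h2.to_comp.partrec₂)
  obtain ⟨c', hc'⟩ := exists_code.1 hgp
  refine ⟨Encodable.encode c', fun m => ?_⟩
  have : (Denumerable.ofNat Code (Encodable.encode c')) = c' := by simp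
  simp only [W, Set.mem_setOf_eq, this, hc', hg]
  refine Nat.rfind_dom.trans ?_
  constructor
  · rintro ⟨s, hs, -⟩
    simp only [Part.mem_some_iff, decide_eq_true_eq] at hs
    -- hs : evaln s.unpair.1 c s.unpair.2 = some m
    exact ⟨s.unpair.2, by rw [← hc]; exact evaln_complete.2 ⟨s.unpair.1, of_decide_eq_true hs.symm⟩⟩
  · rintro ⟨n, hn⟩
    rw [← hc] at hn
    obtain ⟨k, hk⟩ := evaln_complete.1 hn
    refine ⟨Nat.pair k n, ?_, fun _ => trivial⟩
    simp only [Nat.unpair_pair, Part.mem_some_iff, decide_eq_true_eq]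
    exact (decide_eq_true hk).symm

/-- If `S = {n | Th(M n) is sound}` (every sentence of `Th(M n)` is true in `ℤ`) and `F`
is a partial computable function defined on all of `S` with `F n ∉ W n` for every
`n ∈ S`, then the theory consisting of the sentences whose Gödel codes are values of
`F` is not sound: it contains a sentence that is false in `ℤ`. -/
theorem stmt_2 (S : Set ℕ)
    (hS : S = {n : ℕ | ∀ φ : Language.ring.Sentence, Encodable.encode φ ∈ W n → ℤ ⊨ φ})
    (F : ℕ →. ℕ) (hF : Partrec F)
    (hdom : S ⊆ {n : ℕ | (F n).Dom})
    (hdiag : ∀ n ∈ S, ∀ m ∈ F n, m ∉ W n) :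
    ∃ φ ∈ {φ : Language.ring.Sentence | ∃ n, (Encodable.encode φ : ℕ) ∈ F n},
      ¬ (ℤ ⊨ φ) := by
  obtain ⟨e, he⟩ := range_is_W F hF
  by_contra h
  push_neg at h
  have heS : e ∈ S := by
    rw [hS]
    intro φ hφ
    exact h φ ((he _).1 hφ)
  obtain ⟨m, hm⟩ := Part.dom_iff_mem.1 (hdom heS)
  exact hdiag e heS m hm ((he m).2 ⟨e, hm⟩)
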